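/- arXiv:0812.1445 — 2 statements merged into one kernel-verified Lean document; each statement's English description precedes it below -/
import Mathlib

section
/- If T is a self-adjoint (unbounded, densely defined) operator on a Hilbert space H, then for every real c > 0, the operator c + T² has dense image; in particular both T + i and T - i have dense image. -/
open LinearPMap Complex

section Aux

variable {H : Type*} [NormedAddCommGroup H] [InnerProductSpace ℂ H] [CompleteSpace H]
variable {T : H →ₗ.[ℂ] H}

local notation "⟪" x ", " y "⟫" => @inner ℂ _ _ x y

/-- Symmetry of a self-adjoint operator. -/
lemma aux_sym (hdense : Dense (T.domain : Set H)) (hT : T.adjoint = T)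
    (x y : T.domain) : ⟪(T x : H), (y : H)⟫ = ⟪(x : H), T y⟫ := by
  have h := LinearPMap.adjoint_isFormalAdjoint hdense (T := T)
  have hle : T ≤ T.adjoint := le_of_eq hT.symm
  have hx' : (x : H) ∈ T.adjoint.domain := hle.1 x.2
  have h1 : T x = T.adjoint ⟨(x : H), hx'⟩ := hle.2 rfl
  have h2 := h ⟨(x : H), hx'⟩ y
  rw [h1]
  exact h2

/-- From the formal-adjoint relation to membership in the domain. -/
lemma aux_mem (hdense : Dense (T.domain : Set H)) (hT : T.adjoint = T)
    {y z : H} (hyz : ∀ x : T.domain, ⟪z, (x : H)⟫ = ⟪y, T x⟫) :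
    ∃ hy : y ∈ T.domain, T ⟨y, hy⟩ = z := by
  have hy' : y ∈ T.adjoint.domain := mem_adjoint_domain_of_exists y ⟨z, hyz⟩
  have happ : T.adjoint ⟨y, hy'⟩ = z := adjoint_apply_eq hdense _ hyz
  have hle : T.adjoint ≤ T := le_of_eq hT
  refine ⟨hle.1 hy', ?_⟩
  rw [← happ]
  exact (hle.2 rfl).symm

/-- A self-adjoint operator has closed graph. -/
lemma aux_closed_graph (hdense : Dense (T.domain : Set H)) (hT : T.adjoint = T) :
    IsClosed (T.graph : Set (H × H)) := by
  have hset : (T.graph : Set (H × H)) =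
      ⋂ x : T.domain, {p : H × H | ⟪p.2, (x : H)⟫ = ⟪p.1, T x⟫} := by
    ext ⟨y, z⟩
    simp only [Set.mem_iInter, Set.mem_setOf_eq, SetLike.mem_coe]
    constructor
    · intro hmem x
      rcases T.mem_graph_iff.mp hmem with ⟨u, hu1, hu2⟩
      have hu1' : (↑u : H) = y := hu1
      have hu2' : (T u : H) = z := hu2
      rw [← hu2', ← hu1']
      exact aux_sym hdense hT u x
    · intro hy
      obtain ⟨hy', happ⟩ := aux_mem hdense hT hy
      have := T.mem_graph ⟨y, hy'⟩
      rwa [happ] at this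
  rw [hset]
  refine isClosed_iInter fun x => isClosed_eq ?_ ?_
  · exact Continuous.inner continuous_snd continuous_const
  · exact Continuous.inner continuous_fst continuous_const

/-- The norm identity for `T + i a`. -/
lemma aux_norm (hdense : Dense (T.domain : Set H)) (hT : T.adjoint = T) (a : ℝ)
    (σ : T.domain) :
    ‖(T σ : H) + ((a : ℂ) * Complex.I) • (σ : H)‖ ^ 2
      = ‖(T σ : H)‖ ^ 2 + a ^ 2 * ‖(σ : H)‖ ^ 2 := by
  have h := @norm_add_sq ℂ _ _ _ _ (T σ : H) (((a : ℂ) * Complex.I) • (σ : H))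
  have him : (⟪(T σ : H), (σ : H)⟫).im = 0 := by
    have h1 : ⟪(T σ : H), (σ : H)⟫ = ⟪(σ : H), T σ⟫ := aux_sym hdense hT σ σ
    have h2 : ⟪(σ : H), (T σ : H)⟫ = starRingEnd ℂ ⟪(T σ : H), (σ : H)⟫ :=
      (inner_conj_symm _ _).symm
    have h4 : (⟪(σ : H), (T σ : H)⟫).im = -(⟪(T σ : H), (σ : H)⟫).im := by
      rw [h2]; exact Complex.conj_im _
    have h3 := congrArg Complex.im h1
    linarith
  have hre : RCLike.re ⟪(T σ : H), ((a : ℂ) * Complex.I) • (σ : H)⟫ = 0 := by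
    rw [inner_smul_right]
    simp only [RCLike.re_to_complex, Complex.mul_re, Complex.mul_im]
    simp [Complex.mul_re, him]
  have hns : ‖((a : ℂ) * Complex.I) • (σ : H)‖ = |a| * ‖(σ : H)‖ := by
    rw [norm_smul]
    simp
  rw [h, hre, hns]
  ring_nf
  rw [_root_.sq_abs]
  ring


/-- For `a ≠ 0` real, the operator `T + iaI` is surjective. -/
lemma aux_surj (hdense : Dense (T.domain : Set H)) (hT : T.adjoint = T) (a : ℝ)
    (ha : a ≠ 0) (y : H) :
    ∃ σ : T.domain, (T σ : H) + ((a : ℂ) * Complex.I) • (σ : H) = y := by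
  set L : T.domain →ₗ[ℂ] H := T.toFun + ((a : ℂ) * Complex.I) • T.domain.subtype with hLdef
  have hL : ∀ σ : T.domain, L σ = (T σ : H) + ((a : ℂ) * Complex.I) • (σ : H) := fun σ => rfl
  have hnorm : ∀ σ : T.domain, ‖L σ‖ ^ 2 = ‖(T σ : H)‖ ^ 2 + a ^ 2 * ‖(σ : H)‖ ^ 2 := by
    intro σ; rw [hL]; exact aux_norm hdense hT a σ
  have habs : 0 < |a| := abs_pos.mpr ha
  have hlow : ∀ σ : T.domain, |a| * ‖(σ : H)‖ ≤ ‖L σ‖ := by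
    intro σ
    have h1 := hnorm σ
    nlinarith [norm_nonneg (L σ), norm_nonneg ((σ : H)), norm_nonneg ((T σ : H)),
      _root_.sq_abs a, abs_nonneg a]
  set K : Submodule ℂ H := LinearMap.range L with hK
  have hKc : IsClosed (K : Set H) := by
    refine IsSeqClosed.isClosed ?_
    intro u z hu huz
    choose σ hσ using fun n => hu n
    have hcu : CauchySeq u := huz.cauchySeq
    have hcs : CauchySeq fun n => ((σ n : H)) := by
      rw [Metric.cauchySeq_iff] at hcu ⊢
      intro ε hε
      obtain ⟨N, hN⟩ := hcu (|a| * ε) (by positivity)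
      refine ⟨N, fun m hm n hn => ?_⟩
      have hd := hN m hm n hn
      rw [dist_eq_norm] at hd ⊢
      have h1 : |a| * ‖(σ m : H) - (σ n : H)‖ ≤ ‖u m - u n‖ := by
        have h2 := hlow (σ m - σ n)
        rw [_root_.map_sub, hσ m, hσ n] at h2
        simpa using h2
      have := lt_of_le_of_lt h1 hd
      exact lt_of_mul_lt_mul_left (by linarith) (le_of_lt habs)
    obtain ⟨x, hx⟩ := cauchySeq_tendsto_of_complete hcs
    have hTconv : Filter.Tendsto (fun n => (T (σ n) : H)) Filter.atTop
        (nhds (z - ((a : ℂ) * Complex.I) • x)) := by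
      have heq : ∀ n, (T (σ n) : H) = u n - ((a : ℂ) * Complex.I) • ((σ n : H)) := by
        intro n
        have := hσ n
        rw [hL] at this
        rw [← this]; abel
      refine Filter.Tendsto.congr (fun n => (heq n).symm) ?_
      exact huz.sub (hx.const_smul _)
    have hmemg : ∀ n, (((σ n : H)), (T (σ n) : H)) ∈ (T.graph : Set (H × H)) :=
      fun n => T.mem_graph (σ n)
    have hlim : Filter.Tendsto (fun n => (((σ n : H)), (T (σ n) : H))) Filter.atTop
        (nhds (x, z - ((a : ℂ) * Complex.I) • x)) := hx.prodMk_nhds hTconv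
    have hxz : (x, z - ((a : ℂ) * Complex.I) • x) ∈ (T.graph : Set (H × H)) :=
      (aux_closed_graph hdense hT).mem_of_tendsto hlim
        (Filter.Eventually.of_forall hmemg)
    rcases T.mem_graph_iff.mp hxz with ⟨v, hv1, hv2⟩
    have hv1' : (↑v : H) = x := hv1
    have hv2' : (T v : H) = z - ((a : ℂ) * Complex.I) • x := hv2
    refine ⟨v, ?_⟩
    rw [hL, hv1', hv2']
    abel
  have hKd : Kᗮ = ⊥ := by
    rw [Submodule.eq_bot_iff]
    intro w hw
    have h0 : ∀ σ : T.domain,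
        (inner ℂ ((T σ : H) + ((a : ℂ) * Complex.I) • (σ : H)) w : ℂ) = 0 := by
      intro σ
      exact (Submodule.mem_orthogonal K w).mp hw _ ⟨σ, rfl⟩
    have hrel : ∀ x : T.domain,
        (inner ℂ (((a : ℂ) * Complex.I) • w) ((x : H)) : ℂ) = inner ℂ w (T x : H) := by
      intro x
      have hx0 := h0 x
      rw [inner_add_left, inner_smul_left] at hx0
      have hc := congrArg (starRingEnd ℂ) hx0
      simp only [_root_.map_add, _root_.map_mul, _root_.map_zero, _root_.map_neg, inner_conj_symm,
        Complex.conj_conj, Complex.conj_I, Complex.conj_ofReal] at hc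
      rw [inner_smul_left]
      simp only [map_mul, Complex.conj_I, Complex.conj_ofReal]
      linear_combination -hc
    obtain ⟨hwmem, hweq⟩ := aux_mem hdense hT hrel
    have hreal : (⟪(T ⟨w, hwmem⟩ : H), w⟫).im = 0 := by
      have h1 := aux_sym hdense hT ⟨w, hwmem⟩ ⟨w, hwmem⟩
      have h2 : ⟪(w : H), (T ⟨w, hwmem⟩ : H)⟫
          = starRingEnd ℂ ⟪(T ⟨w, hwmem⟩ : H), w⟫ := (inner_conj_symm _ _).symm
      have h4 : (⟪(w : H), (T ⟨w, hwmem⟩ : H)⟫).im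
          = -(⟪(T ⟨w, hwmem⟩ : H), w⟫).im := by
        rw [h2]; exact Complex.conj_im _
      have h3 := congrArg Complex.im h1
      simp only [Submodule.coe_mk] at h3 h4 ⊢
      linarith
    rw [hweq, inner_smul_left] at hreal
    simp only [_root_.map_mul, Complex.conj_I, Complex.conj_ofReal] at hreal
    have hre' : (⟪w, w⟫).re = ‖w‖ * ‖w‖ := by
      have h6 := @inner_self_eq_norm_mul_norm ℂ H _ _ _ w
      simpa using h6
    have him' : (⟪w, w⟫).im = 0 := by
      have h7 := @inner_self_im ℂ H _ _ _ w
      simpa only [RCLike.im_to_complex] using h7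
    rw [Complex.mul_im, Complex.mul_im, Complex.mul_re] at hreal
    simp only [Complex.ofReal_re, Complex.ofReal_im, Complex.neg_re, Complex.neg_im,
      Complex.I_re, Complex.I_im, him', hre'] at hreal
    have haw : a * (‖w‖ * ‖w‖) = 0 := by linarith
    have hw0 : ‖w‖ = 0 := by
      rcases mul_eq_zero.mp haw with h | h
      · exact absurd h ha
      · nlinarith [norm_nonneg w]
    exact norm_eq_zero.mp hw0
  have hKtop : K = ⊤ := by
    have h := Submodule.topologicalClosure_eq_top_iff.mpr hKd
    rwa [hKc.submodule_topologicalClosure_eq] at h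
  have hy : y ∈ K := by rw [hKtop]; trivial
  obtain ⟨σ, hσ⟩ := hy
  exact ⟨σ, by rw [← hL]; exact hσ⟩

end Aux

/-- If `T` is a densely defined self-adjoint operator on a complex Hilbert space `H`,
then for every real `c > 0` the operator `c + T²` (defined on `Dom(T²)`) has dense image;
in particular both `T + i` and `T - i` have dense image. -/
theorem stmt_0 {H : Type*} [NormedAddCommGroup H] [InnerProductSpace ℂ H] [CompleteSpace H]
    (T : H →ₗ.[ℂ] H) (hdense : Dense (T.domain : Set H)) (hT : IsSelfAdjoint T) :
    (∀ c : ℝ, 0 < c →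
      Dense {y : H | ∃ (σ : T.domain) (h : T σ ∈ T.domain),
        (c : ℂ) • (σ : H) + T ⟨T σ, h⟩ = y}) ∧
    Dense (Set.range fun σ : T.domain => T σ + Complex.I • (σ : H)) ∧
    Dense (Set.range fun σ : T.domain => T σ - Complex.I • (σ : H)) := by
  rw [LinearPMap.isSelfAdjoint_def] at hT
  refine ⟨?_, ?_, ?_⟩
  · intro c hc
    set a := Real.sqrt c with ha_def
    have has : a ≠ 0 := ne_of_gt (Real.sqrt_pos.mpr hc)
    have hset : {y : H | ∃ (σ : T.domain) (h : T σ ∈ T.domain),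
        (c : ℂ) • (σ : H) + T ⟨T σ, h⟩ = y} = Set.univ := by
      ext y
      simp only [Set.mem_setOf_eq, Set.mem_univ, iff_true]
      obtain ⟨w, hw⟩ := aux_surj hdense hT a has y
      obtain ⟨σ, hσ⟩ := aux_surj hdense hT (-a) (neg_ne_zero.mpr has) (w : H)
      have hTσ : (T σ : H) = (w : H) + ((a : ℂ) * Complex.I) • (σ : H) := by
        rw [← hσ]
        push_cast
        module
      have hmem : (T σ : H) ∈ T.domain := by
        rw [hTσ]
        exact T.domain.add_mem w.2 (T.domain.smul_mem _ σ.2)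
      refine ⟨σ, hmem, ?_⟩
      have hsub : (⟨(T σ : H), hmem⟩ : T.domain) = w + ((a : ℂ) * Complex.I) • σ := by
        apply Subtype.ext
        push_cast
        exact hTσ
      rw [hsub, T.map_add, T.map_smul]
      have hTw : (T w : H) = y - ((a : ℂ) * Complex.I) • (w : H) := by
        rw [← hw]; abel
      rw [hTw, hTσ]
      have hc2 : ((c : ℝ) : ℂ) = ((a : ℂ)) ^ 2 := by
        have : a ^ 2 = c := Real.sq_sqrt hc.le
        rw [← this]
        push_cast
        ring
      rw [hc2]
      have hI : ((a : ℂ) * Complex.I) • (((w : H)) + ((a : ℂ) * Complex.I) • (σ : H))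
          = ((a : ℂ) * Complex.I) • (w : H) - ((a : ℂ) ^ 2) • (σ : H) := by
        rw [smul_add, smul_smul]
        have h9 : ((a : ℂ) * Complex.I) * ((a : ℂ) * Complex.I) = -((a : ℂ) ^ 2) := by
          have := Complex.I_sq
          ring_nf
          rw [Complex.I_sq]
          ring
        rw [h9, neg_smul]
        abel
      rw [hI]
      abel
    rw [hset]
    exact dense_univ
  · have hset : (Set.range fun σ : T.domain => T σ + Complex.I • (σ : H)) = Set.univ := by
      ext y
      simp only [Set.mem_range, Set.mem_univ, iff_true]
      obtain ⟨σ, hσ⟩ := aux_surj hdense hT 1 one_ne_zero y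
      refine ⟨σ, ?_⟩
      simpa using hσ
    rw [hset]
    exact dense_univ
  · have hset : (Set.range fun σ : T.domain => T σ - Complex.I • (σ : H)) = Set.univ := by
      ext y
      simp only [Set.mem_range, Set.mem_univ, iff_true]
      obtain ⟨σ, hσ⟩ := aux_surj hdense hT (-1) (by norm_num) y
      refine ⟨σ, ?_⟩
      rw [← hσ]
      push_cast
      module
    rw [hset]
    exact dense_univ
end

section
/- Let T be a self-adjoint operator on a Hilbert space with bounded inverse (i.e., T is bijective from its domain onto H with bounded inverse). Then the family U(s) = (T - si)(T + si)⁻¹, for s ∈ [0,1], is a norm-continuous path of bounded operators connecting the identity U(0) = 1 to the Cayley transform U(1) of T. -/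
/-- If `T` is a densely defined self-adjoint operator with bounded inverse `B`, then the
Cayley transforms `U(s) = (T - si)(T + si)⁻¹`, `s ∈ [0,1]`, form a norm-continuous path of
bounded operators from the identity `U(0) = 1` to the Cayley transform `U(1)` of `T`;
here `U(s)` is characterized by `U(s)((T + si)σ) = (T - si)σ` for all `σ ∈ Dom T`. -/
theorem stmt_6 {H : Type*} [NormedAddCommGroup H] [InnerProductSpace ℂ H] [CompleteSpace H]
    (T : H →ₗ.[ℂ] H) (hdense : Dense (T.domain : Set H)) (hT : IsSelfAdjoint T)
    (B : H →L[ℂ] H) (hBmem : ∀ x : H, B x ∈ T.domain)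
    (hB₁ : ∀ x : H, T ⟨B x, hBmem x⟩ = x) (hB₂ : ∀ σ : T.domain, B (T σ) = σ) :
    ∃ U : ℝ → H →L[ℂ] H,
      ContinuousOn U (Set.Icc 0 1) ∧ U 0 = 1 ∧
      ∀ s ∈ Set.Icc (0 : ℝ) 1, ∀ σ : T.domain,
        U s (T σ + ((s : ℂ) * Complex.I) • (σ : H)) =
          T σ - ((s : ℂ) * Complex.I) • (σ : H) := by
  -- T is symmetric
  have hTadj : T.adjoint = T := hT
  have hsymT : T.IsFormalAdjoint T := by
    have h := LinearPMap.adjoint_isFormalAdjoint hdense (T := T)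
    rwa [hTadj] at h
  -- B is self-adjoint
  have hBsym : (B : H →ₗ[ℂ] H).IsSymmetric := by
    intro x y
    have h := hsymT ⟨B x, hBmem x⟩ ⟨B y, hBmem y⟩
    rw [hB₁ x, hB₁ y] at h
    exact h.symm
  have hBsa : IsSelfAdjoint B :=
    (ContinuousLinearMap.isSelfAdjoint_iff_isSymmetric).mpr hBsym
  -- 1 + s i B is invertible for all real s
  have hunit : ∀ s : ℝ, IsUnit ((1 : H →L[ℂ] H) + ((s : ℂ) * Complex.I) • B) := by
    intro s
    rcases eq_or_ne s 0 with h | h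
    · subst h; simp
    set c : ℂ := (s : ℂ) * Complex.I with hc_def
    have hs : (s : ℂ) ≠ 0 := by exact_mod_cast h
    have hc : c ≠ 0 := mul_ne_zero hs Complex.I_ne_zero
    have hone : c * (-((s : ℂ))⁻¹ * Complex.I) = 1 := by
      rw [show c * (-((s : ℂ))⁻¹ * Complex.I)
          = -((s : ℂ) * ((s : ℂ))⁻¹) * (Complex.I * Complex.I) from by rw [hc_def]; ring,
        Complex.I_mul_I, mul_inv_cancel₀ hs]
      ring
    have hcinv : c⁻¹ = -((s : ℂ))⁻¹ * Complex.I := inv_eq_of_mul_eq_one_right hone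
    have hz : (-c⁻¹) ∉ spectrum ℂ B := by
      intro hmem
      have hre := hBsa.mem_spectrum_eq_re hmem
      have him : (-c⁻¹).im = 0 := by rw [hre]; simp
      rw [hcinv] at him
      simp [Complex.mul_im] at him
      exact h (by exact_mod_cast him)
    have hu : IsUnit ((algebraMap ℂ (H →L[ℂ] H)) (-c⁻¹) - B) := spectrum.notMem_iff.mp hz
    have hmul : (-c) * (-c⁻¹) = 1 := by
      rw [neg_mul_neg, mul_inv_cancel₀ hc]
    have key : (1 : H →L[ℂ] H) + c • B
        = (-c) • ((algebraMap ℂ (H →L[ℂ] H)) (-c⁻¹) - B) := by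
      rw [Algebra.algebraMap_eq_smul_one, smul_sub, smul_smul, hmul, one_smul, neg_smul,
        sub_neg_eq_add]
    rw [key, Algebra.smul_def]
    exact ((isUnit_iff_ne_zero.mpr (neg_ne_zero.mpr hc)).map
      (algebraMap ℂ (H →L[ℂ] H))).mul hu
  -- the path
  refine ⟨fun s => ((1 : H →L[ℂ] H) - ((s : ℂ) * Complex.I) • B) *
      Ring.inverse ((1 : H →L[ℂ] H) + ((s : ℂ) * Complex.I) • B), ?_, ?_, ?_⟩
  · -- continuity
    have hf : Continuous (fun s : ℝ => (1 : H →L[ℂ] H) + ((s : ℂ) * Complex.I) • B) := by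
      fun_prop
    have hg : Continuous (fun s : ℝ => (1 : H →L[ℂ] H) - ((s : ℂ) * Complex.I) • B) := by
      fun_prop
    intro s _
    refine ContinuousAt.continuousWithinAt ?_
    refine ContinuousAt.mul hg.continuousAt ?_
    have hinv : ContinuousAt Ring.inverse
        ((1 : H →L[ℂ] H) + ((s : ℂ) * Complex.I) • B) := by
      have := NormedRing.inverse_continuousAt (hunit s).unit
      rwa [IsUnit.unit_spec] at this
    exact ContinuousAt.comp (f := fun t : ℝ => (1 : H →L[ℂ] H) + ((t : ℂ) * Complex.I) • B) hinv hf.continuousAt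
  · simp
  · intro s _ σ
    set c : ℂ := (s : ℂ) * Complex.I
    have hx : (T σ : H) + c • (σ : H)
        = ((1 : H →L[ℂ] H) + c • B) (T σ) := by
      simp [ContinuousLinearMap.add_apply, hB₂ σ]
    rw [hx]
    have hcancel : Ring.inverse ((1 : H →L[ℂ] H) + c • B)
        (((1 : H →L[ℂ] H) + c • B) (T σ)) = T σ := by
      have h := Ring.inverse_mul_cancel _ (hunit s)
      calc Ring.inverse ((1 : H →L[ℂ] H) + c • B) (((1 : H →L[ℂ] H) + c • B) (T σ))
          = (Ring.inverse ((1 : H →L[ℂ] H) + c • B) * ((1 : H →L[ℂ] H) + c • B)) (T σ) := rfl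
        _ = ((1 : H →L[ℂ] H)) (T σ) := by rw [h]
        _ = T σ := rfl
    rw [ContinuousLinearMap.mul_apply, hcancel]
    simp [ContinuousLinearMap.sub_apply, hB₂ σ]
    rfl
end
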